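/- For any graphs G and H, ϑ⁻(G ⊠ H) ≤ ϑ⁻(G) · ϑ⁺(H). -/

import Mathlib

open Finset

namespace SimpleGraph

variable {V W : Type*}

/-- The strong graph product. -/
def strongProd (G : SimpleGraph V) (H : SimpleGraph W) : SimpleGraph (V × W) where
  Adj x y := x ≠ y ∧ (x.1 = y.1 ∨ G.Adj x.1 y.1) ∧ (x.2 = y.2 ∨ H.Adj x.2 y.2)
  symm := by
    constructor
    rintro x y ⟨hne, h1, h2⟩
    exact ⟨hne.symm, h1.imp Eq.symm (fun h => G.adj_symm h), h2.imp Eq.symm (fun h => H.adj_symm h)⟩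
  loopless := by constructor; rintro x ⟨hne, -, -⟩; exact hne rfl

/-- The disjunctive graph product. -/
def disjProd (G : SimpleGraph V) (H : SimpleGraph W) : SimpleGraph (V × W) where
  Adj x y := G.Adj x.1 y.1 ∨ H.Adj x.2 y.2
  symm := ⟨fun _ _ h => Or.imp (fun h => G.adj_symm h) (fun h => H.adj_symm h) h⟩
  loopless := ⟨fun x h => Or.elim h (G.loopless.irrefl x.1) (H.loopless.irrefl x.2)⟩

/-- A finite set of vertices is independent if no two of its members are adjacent. -/
def IsIndep (G : SimpleGraph V) (s : Finset V) : Prop :=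
  ∀ ⦃v⦄, v ∈ s → ∀ ⦃w⦄, w ∈ s → ¬ G.Adj v w

/-- The independence number. -/
noncomputable def alpha (G : SimpleGraph V) [Fintype V] : ℕ :=
  sSup {n | ∃ s : Finset V, G.IsIndep s ∧ s.card = n}

/-- The fractional packing number. -/
noncomputable def alphaStar (G : SimpleGraph V) [Fintype V] : ℝ :=
  sSup {x | ∃ t : V → ℝ, (∀ v, 0 ≤ t v) ∧
    (∀ C : Finset V, G.IsClique (C : Set V) → ∑ v ∈ C, t v ≤ 1) ∧ x = ∑ v, t v}

/-- The Lovász number. -/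
noncomputable def lovTheta (G : SimpleGraph V) [Fintype V] : ℝ :=
  sSup {x | ∃ B : Matrix V V ℝ, B.PosSemidef ∧ B.trace = 1 ∧
    (∀ v w, G.Adj v w → B v w = 0) ∧ x = ∑ v, ∑ w, B v w}

/-- Schrijver's variant of the Lovász number. -/
noncomputable def thetaMinus (G : SimpleGraph V) [Fintype V] : ℝ :=
  sSup {x | ∃ B : Matrix V V ℝ, B.PosSemidef ∧ B.trace = 1 ∧ (∀ v w, 0 ≤ B v w) ∧
    (∀ v w, G.Adj v w → B v w = 0) ∧ x = ∑ v, ∑ w, B v w}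

/-- Szegedy's variant of the Lovász number. -/
noncomputable def thetaPlus (G : SimpleGraph V) [Fintype V] : ℝ :=
  sSup {x | ∃ B : Matrix V V ℝ, B.PosSemidef ∧ B.trace = 1 ∧
    (∀ v w, G.Adj v w → B v w ≤ 0) ∧ x = ∑ v, ∑ w, B v w}

/-- The clique covering number. -/
noncomputable def cliqueCoverNum (G : SimpleGraph V) [Fintype V] : ℕ :=
  sInf {n | ∃ C : Fin n → Finset V, (∀ i, G.IsClique (C i : Set V)) ∧ ∀ v, ∃ i, v ∈ C i}

/-- The blow-up of a graph along integer vertex weights. -/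
def blup (G : SimpleGraph V) (p : V → ℕ) : SimpleGraph (Σ v, Fin (p v)) where
  Adj x y := G.Adj x.1 y.1
  symm := ⟨fun _ _ h => G.adj_symm h⟩
  loopless := ⟨fun x h => G.loopless.irrefl x.1 h⟩

/-- The weighted independence number (integer weights). -/
noncomputable def alphaWNat (G : SimpleGraph V) [Fintype V] (p : V → ℕ) : ℕ :=
  sSup {n | ∃ s : Finset V, G.IsIndep s ∧ n = ∑ v ∈ s, p v}

/-- The weighted independence number (real weights). -/
noncomputable def alphaW (G : SimpleGraph V) [Fintype V] (p : V → ℝ) : ℝ :=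
  sSup {x | ∃ s : Finset V, G.IsIndep s ∧ x = ∑ v ∈ s, p v}

end SimpleGraph

open SimpleGraph
open scoped RealInnerProductSpace

namespace ThetaAux

open SimpleGraph Matrix

variable {V : Type*} [Fintype V]

lemma psd_quad {B : Matrix V V ℝ} (hB : B.PosSemidef) (x : V → ℝ) :
    0 ≤ ∑ v, ∑ w, x v * B v w * x w := by
  have h := hB.dotProduct_mulVec_nonneg x
  simp only [dotProduct, Matrix.mulVec, star_trivial, Pi.star_apply] at h
  calc (0:ℝ) ≤ ∑ v, x v * ∑ w, B v w * x w := h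
  _ = ∑ v, ∑ w, x v * B v w * x w := by
      refine Finset.sum_congr rfl fun v _ => ?_
      rw [Finset.mul_sum]; exact Finset.sum_congr rfl fun w _ => by ring

lemma psd_of_quad {B : Matrix V V ℝ} (hsym : ∀ v w, B v w = B w v)
    (h : ∀ x : V → ℝ, 0 ≤ ∑ v, ∑ w, x v * B v w * x w) : B.PosSemidef := by
  refine Matrix.PosSemidef.of_dotProduct_mulVec_nonneg ?_ ?_
  · ext v w
    simp [Matrix.conjTranspose_apply, hsym w v]
  · intro x
    have := h x
    simp only [dotProduct, Matrix.mulVec, star_trivial]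
    calc (0:ℝ) ≤ ∑ v, ∑ w, x v * B v w * x w := this
    _ = ∑ v, x v * ∑ w, B v w * x w := by
      refine Finset.sum_congr rfl fun v _ => ?_
      rw [Finset.mul_sum]; exact Finset.sum_congr rfl fun w _ => by ring

lemma quad_two {B : V → V → ℝ} (h : ∀ x : V → ℝ, 0 ≤ ∑ v, ∑ w, x v * B v w * x w)
    {v w : V} (hvw : v ≠ w) (a b : ℝ) :
    0 ≤ a * a * B v v + a * b * (B v w + B w v) + b * b * B w w := by
  classical
  have h2 := h (fun u => (if u = v then a else 0) + (if u = w then b else 0))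
  have hexp : ∀ u u' : V,
      ((if u = v then a else 0) + (if u = w then b else 0)) * B u u' *
        ((if u' = v then a else 0) + (if u' = w then b else 0))
      = (if u = v then if u' = v then a * a * B v v else 0 else 0)
        + (if u = v then if u' = w then a * b * B v w else 0 else 0)
        + (if u = w then if u' = v then b * a * B w v else 0 else 0)
        + (if u = w then if u' = w then b * b * B w w else 0 else 0) := by
    intro u u'
    by_cases h1 : u = v <;> by_cases h2 : u = w <;>
      by_cases h3 : u' = v <;> by_cases h4 : u' = w <;>
      simp_all <;> ring
  rw [show (∑ u, ∑ u', ((if u = v then a else 0) + (if u = w then b else 0)) * B u u' *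
        ((if u' = v then a else 0) + (if u' = w then b else 0)))
      = a * a * B v v + a * b * B v w + b * a * B w v + b * b * B w w from ?_] at h2
  · nlinarith [h2]
  · simp only [hexp, Finset.sum_add_distrib]
    simp [Finset.sum_ite_eq', hvw]

lemma psd_sum_le_card {B : Matrix V V ℝ} (hB : B.PosSemidef) (htr : B.trace = 1) :
    ∑ v, ∑ w, B v w ≤ (Fintype.card V : ℝ) := by
  have hsym : ∀ v w, B w v = B v w := fun v w => by
    have := hB.1.apply v w
    simpa using this
  have hpt : ∀ v w, B v w ≤ (B v v + B w w) / 2 := by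
    intro v w
    by_cases hvw : v = w
    · subst hvw; linarith
    · have := quad_two (fun x => psd_quad hB x) hvw 1 (-1)
      have hs := hsym v w
      nlinarith
  have htr' : ∑ v, B v v = 1 := by
    have : B.trace = ∑ v, B v v := by simp [Matrix.trace, Matrix.diag]
    rw [← this, htr]
  calc ∑ v, ∑ w, B v w ≤ ∑ v, ∑ w, (B v v + B w w) / 2 :=
        Finset.sum_le_sum fun v _ => Finset.sum_le_sum fun w _ => hpt v w
  _ = (Fintype.card V : ℝ) := by
      have h1 : ∑ v, ∑ w, (B v v + B w w) / 2
          = (∑ v : V, ∑ _w : V, B v v / 2) + ∑ v : V, ∑ w : V, B w w / 2 := by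
        rw [← Finset.sum_add_distrib]
        refine Finset.sum_congr rfl fun v _ => ?_
        rw [← Finset.sum_add_distrib]
        exact Finset.sum_congr rfl fun w _ => by ring
      have h2 : ∑ v : V, ∑ _w : V, B v v / 2 = (Fintype.card V : ℝ) * (1 / 2) := by
        simp only [Finset.sum_const, Finset.card_univ, nsmul_eq_mul]
        rw [← Finset.mul_sum, ← Finset.sum_div, htr']
      rw [h1, Finset.sum_comm (f := fun v w => B w w / 2), h2]
      ring

lemma bdd_thetaMinus_set (G : SimpleGraph V) :
    BddAbove {x | ∃ B : Matrix V V ℝ, B.PosSemidef ∧ B.trace = 1 ∧ (∀ v w, 0 ≤ B v w) ∧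
      (∀ v w, G.Adj v w → B v w = 0) ∧ x = ∑ v, ∑ w, B v w} :=
  ⟨(Fintype.card V : ℝ), by rintro x ⟨B, h1, h2, -, -, rfl⟩; exact psd_sum_le_card h1 h2⟩

lemma exists_dual (G : SimpleGraph V) {ε : ℝ} (hε : 0 < ε) :
    ∃ M : Matrix V V ℝ, M.PosSemidef ∧
      (∀ v w, v ≠ w → ¬ G.Adj v w → M v w ≤ -1) ∧
      (∀ v, M v v ≤ G.thetaMinus - 1 + ε) := by
  classical
  set d : ℝ := G.thetaMinus - 1 + ε with hd
  set s : Set (V → V → ℝ) :=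
    {N | (∀ v, N v v < d) ∧ ∀ v w, v ≠ w → ¬ G.Adj v w → N v w < -1} with hs
  set t : Set (V → V → ℝ) :=
    {M | (∀ v w, M v w = M w v) ∧ ∀ x : V → ℝ, 0 ≤ ∑ v, ∑ w, x v * M v w * x w} with ht
  by_cases hne : (s ∩ t).Nonempty
  · obtain ⟨N, hNs, hNt⟩ := hne
    exact ⟨Matrix.of N, psd_of_quad hNt.1 hNt.2,
      fun v w h1 h2 => (hNs.2 v w h1 h2).le, fun v => (hNs.1 v).le⟩
  exfalso
  -- separation
  have hsrep : s = (⋂ v, {N : V → V → ℝ | N v v < d}) ∩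
      ⋂ (v) (w), {N : V → V → ℝ | v ≠ w → ¬ G.Adj v w → N v w < -1} := by
    ext N
    simp only [hs, Set.mem_setOf_eq, Set.mem_inter_iff, Set.mem_iInter]
  have hcell : ∀ v w : V, IsOpen {N : V → V → ℝ | v ≠ w → ¬ G.Adj v w → N v w < -1} ∧
      Convex ℝ {N : V → V → ℝ | v ≠ w → ¬ G.Adj v w → N v w < -1} := by
    intro v w
    by_cases hc : v ≠ w ∧ ¬ G.Adj v w
    · have : {N : V → V → ℝ | v ≠ w → ¬ G.Adj v w → N v w < -1}
          = {N : V → V → ℝ | N v w < -1} := by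
        ext N; simp [hc.1, hc.2]
      rw [this]
      exact ⟨isOpen_lt ((continuous_apply w).comp (continuous_apply v)) continuous_const,
        convex_halfSpace_lt ⟨fun _ _ => rfl, fun _ _ => rfl⟩ _⟩
    · have : {N : V → V → ℝ | v ≠ w → ¬ G.Adj v w → N v w < -1} = Set.univ := by
        ext N
        simp only [Set.mem_univ, iff_true, Set.mem_setOf_eq]
        intro h1 h2; exact absurd ⟨h1, h2⟩ hc
      rw [this]
      exact ⟨isOpen_univ, convex_univ⟩
  have hsopen : IsOpen s := by
    rw [hsrep]
    exact IsOpen.inter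
      (isOpen_iInter_of_finite fun v =>
        isOpen_lt ((continuous_apply v).comp (continuous_apply v)) continuous_const)
      (isOpen_iInter_of_finite fun v => isOpen_iInter_of_finite fun w => (hcell v w).1)
  have hsconv : Convex ℝ s := by
    rw [hsrep]
    exact Convex.inter
      (convex_iInter fun v => convex_halfSpace_lt ⟨fun _ _ => rfl, fun _ _ => rfl⟩ _)
      (convex_iInter fun v => convex_iInter fun w => (hcell v w).2)
  have htconv : Convex ℝ t := by
    rintro M₁ ⟨hs₁, hq₁⟩ M₂ ⟨hs₂, hq₂⟩ a b ha hb hab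
    refine ⟨fun v w => by simp [hs₁ v w, hs₂ v w], fun x => ?_⟩
    have heq : ∑ v, ∑ w, x v * (a • M₁ + b • M₂) v w * x w
        = a * (∑ v, ∑ w, x v * M₁ v w * x w) + b * (∑ v, ∑ w, x v * M₂ v w * x w) := by
      rw [Finset.mul_sum, Finset.mul_sum, ← Finset.sum_add_distrib]
      refine Finset.sum_congr rfl fun v _ => ?_
      rw [Finset.mul_sum, Finset.mul_sum, ← Finset.sum_add_distrib]
      refine Finset.sum_congr rfl fun w _ => ?_
      simp only [Pi.add_apply, Pi.smul_apply, smul_eq_mul]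
      ring
    rw [heq]
    exact add_nonneg (mul_nonneg ha (hq₁ x)) (mul_nonneg hb (hq₂ x))
  have hdisj : Disjoint s t := Set.disjoint_iff_inter_eq_empty.mpr
    (Set.not_nonempty_iff_eq_empty.mp hne)
  obtain ⟨f, u, hfs, hft⟩ := geometric_hahn_banach_open hsconv hsopen htconv hdisj
  set sgl : V → V → (V → V → ℝ) :=
    fun v w => fun i j => if i = v then if j = w then 1 else 0 else 0 with hsgl
  set Bf : V → V → ℝ := fun v w => f (sgl v w) with hBf
  have hrep : ∀ X : V → V → ℝ, f X = ∑ v, ∑ w, X v w * Bf v w := by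
    intro X
    have hX : X = ∑ v, ∑ w, X v w • sgl v w := by
      funext i j
      simp only [Finset.sum_apply, Pi.smul_apply, smul_eq_mul, hsgl]
      simp [mul_ite, Finset.sum_ite_eq]
    calc f X = f (∑ v, ∑ w, X v w • sgl v w) := by rw [← hX]
    _ = ∑ v, ∑ w, X v w * Bf v w := by
        rw [map_sum]
        refine Finset.sum_congr rfl fun v _ => ?_
        rw [map_sum]
        refine Finset.sum_congr rfl fun w _ => ?_
        rw [f.map_smul, smul_eq_mul]
  -- basic consequences
  have hu0 : u ≤ 0 := by
    have h0t : (0 : V → V → ℝ) ∈ t := by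
      refine ⟨fun v w => rfl, fun x => ?_⟩
      simp
    have := hft 0 h0t
    simpa using this
  have hPSDf : ∀ x : V → ℝ, 0 ≤ ∑ v, ∑ w, x v * Bf v w * x w := by
    intro y
    have hXt : ∀ c : ℝ, 0 ≤ c → ((fun v w => c * (y v * y w)) : V → V → ℝ) ∈ t := by
      intro c hc
      refine ⟨fun v w => by ring_nf, fun x => ?_⟩
      have e1 : ∀ v, ∑ w, x v * (c * (y v * y w)) * x w
          = x v * y v * (c * ∑ w, y w * x w) := by
        intro v
        rw [Finset.mul_sum, Finset.mul_sum]
        exact Finset.sum_congr rfl fun w _ => by ring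
      rw [Finset.sum_congr rfl (fun v _ => e1 v)]
      rw [← Finset.sum_mul]
      have e3 : (∑ w, y w * x w) = ∑ v, x v * y v :=
        Finset.sum_congr rfl fun w _ => by ring
      rw [e3]
      nlinarith [mul_nonneg hc (sq_nonneg (∑ v, x v * y v))]
    have hval : ∀ c : ℝ, f ((fun v w => c * (y v * y w)) : V → V → ℝ)
        = c * ∑ v, ∑ w, y v * Bf v w * y w := by
      intro c
      rw [hrep]
      rw [Finset.mul_sum]
      refine Finset.sum_congr rfl fun v _ => ?_
      rw [Finset.mul_sum]
      exact Finset.sum_congr rfl fun w _ => by ring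
    by_contra hneg
    push_neg at hneg
    set Q := ∑ v, ∑ w, y v * Bf v w * y w
    have hc : 0 ≤ (u - 1) / Q := by
      rw [div_nonneg_iff]; right; constructor <;> linarith
    have := hft _ (hXt _ hc)
    rw [hval] at this
    rw [div_mul_cancel₀ _ (ne_of_lt hneg)] at this
    linarith
  -- base point
  set N₀ : V → V → ℝ := fun i j => if i = j then d - 1 else -2 with hN₀
  have hN₀s : N₀ ∈ s := by
    constructor
    · intro v
      show (if v = v then d - 1 else -2) < d
      rw [if_pos rfl]; linarith
    · intro v w hvw _
      show (if v = w then d - 1 else -2) < -1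
      rw [if_neg hvw]; norm_num
  have hfN₀ : f N₀ < u := hfs N₀ hN₀s
  -- edges : Bf = 0
  have hedge0 : ∀ v w, G.Adj v w → Bf v w = 0 := by
    intro v w hadj
    have hvw : v ≠ w := G.ne_of_adj hadj
    have hmem : ∀ c : ℝ, (N₀ + c • sgl v w) ∈ s := by
      intro c
      constructor
      · intro a
        simp only [Pi.add_apply, Pi.smul_apply, smul_eq_mul, hN₀, hsgl]
        rw [if_true]
        by_cases hav : a = v
        · subst hav; rw [if_pos rfl, if_neg hvw, mul_zero, add_zero]; linarith
        · rw [if_neg hav, mul_zero, add_zero]; linarith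
      · intro a b hab hnadj
        simp only [Pi.add_apply, Pi.smul_apply, smul_eq_mul, hN₀, hsgl]
        have hz : (if a = v then if b = w then (1:ℝ) else 0 else 0) = 0 := by
          by_cases h1 : a = v
          · by_cases h2 : b = w
            · exfalso; subst h1; subst h2; exact hnadj hadj
            · simp [h1, h2]
          · simp [h1]
        rw [hz, mul_zero, add_zero, if_neg hab]
        norm_num
    have hlt : ∀ c : ℝ, f N₀ + c * Bf v w < u := by
      intro c
      have := hfs _ (hmem c)
      rw [map_add, f.map_smul, smul_eq_mul] at this
      exact this
    by_contra hBne
    have h1 := hlt ((u - f N₀) / Bf v w)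
    rw [div_mul_cancel₀ _ hBne] at h1
    linarith
  -- nonedges : Bf ≥ 0
  have hnn : ∀ v w, v ≠ w → ¬ G.Adj v w → 0 ≤ Bf v w := by
    intro v w hvw hnadj
    have hmem : ∀ c : ℝ, c ≤ 0 → (N₀ + c • sgl v w) ∈ s := by
      intro c hc
      constructor
      · intro a
        simp only [Pi.add_apply, Pi.smul_apply, smul_eq_mul, hN₀, hsgl]
        rw [if_true]
        by_cases hav : a = v
        · subst hav; rw [if_pos rfl, if_neg hvw, mul_zero, add_zero]; linarith
        · rw [if_neg hav, mul_zero, add_zero]; linarith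
      · intro a b hab hnadj'
        simp only [Pi.add_apply, Pi.smul_apply, smul_eq_mul, hN₀, hsgl]
        rw [if_neg hab]
        by_cases h1 : a = v
        · by_cases h2 : b = w
          · rw [if_pos h1, if_pos h2, mul_one]; linarith
          · rw [if_pos h1, if_neg h2, mul_zero, add_zero]; norm_num
        · rw [if_neg h1, mul_zero, add_zero]; norm_num
    by_contra hBne
    push_neg at hBne
    have hcneg : (u - f N₀) / Bf v w ≤ 0 := by
      apply div_nonpos_of_nonneg_of_nonpos <;> linarith
    have h1 := hfs _ (hmem _ hcneg)
    rw [map_add, f.map_smul, smul_eq_mul, div_mul_cancel₀ _ (ne_of_lt hBne)] at h1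
    linarith
  -- diagonal : Bf ≥ 0
  have hdiag : ∀ v, 0 ≤ Bf v v := by
    intro v
    have hmem : ∀ c : ℝ, c ≤ 0 → (N₀ + c • sgl v v) ∈ s := by
      intro c hc
      constructor
      · intro a
        simp only [Pi.add_apply, Pi.smul_apply, smul_eq_mul, hN₀, hsgl]
        rw [if_true]
        by_cases hav : a = v
        · subst hav; rw [if_pos rfl, if_pos rfl, mul_one]; linarith
        · rw [if_neg hav, mul_zero, add_zero]; linarith
      · intro a b hab hnadj'
        simp only [Pi.add_apply, Pi.smul_apply, smul_eq_mul, hN₀, hsgl]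
        have hz : (if a = v then if b = v then (1:ℝ) else 0 else 0) = 0 := by
          by_cases h1 : a = v
          · by_cases h2 : b = v
            · exfalso; subst h1; subst h2; exact hab rfl
            · simp [h1, h2]
          · simp [h1]
        rw [hz, mul_zero, add_zero, if_neg hab]
        norm_num
    by_contra hBne
    push_neg at hBne
    have hcneg : (u - f N₀) / Bf v v ≤ 0 := by
      apply div_nonpos_of_nonneg_of_nonpos <;> linarith
    have h1 := hfs _ (hmem _ hcneg)
    rw [map_add, f.map_smul, smul_eq_mul, div_mul_cancel₀ _ (ne_of_lt hBne)] at h1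
    linarith
  -- all entries nonneg
  have helem : ∀ v w, 0 ≤ Bf v w := by
    intro v w
    by_cases hvw : v = w
    · subst hvw; exact hdiag v
    · by_cases hadj : G.Adj v w
      · rw [hedge0 v w hadj]
      · exact hnn v w hvw hadj
  set T : ℝ := ∑ v, Bf v v with hT
  set S : ℝ := ∑ v, ∑ w, Bf v w with hS
  have hTnn : 0 ≤ T := Finset.sum_nonneg fun v _ => hdiag v
  have hTS : T ≤ S := by
    refine Finset.sum_le_sum fun v _ => ?_
    exact Finset.single_le_sum (fun w _ => helem v w) (Finset.mem_univ v)
  have hSnn : 0 ≤ S := le_trans hTnn hTS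
  -- key inequality from N_δ
  have hkey : ∀ δ : ℝ, 0 < δ → (d - δ) * T + (-1 - δ) * (S - T) < u := by
    intro δ hδ
    set Nδ : V → V → ℝ :=
      fun i j => if i = j then d - δ else if G.Adj i j then 0 else -1 - δ with hNδ
    have hNδs : Nδ ∈ s := by
      constructor
      · intro v
        show (if v = v then d - δ else _) < d
        rw [if_pos rfl]; linarith
      · intro v w hvw hnadj
        show (if v = w then d - δ else if G.Adj v w then 0 else -1 - δ) < -1
        rw [if_neg hvw, if_neg hnadj]; linarith
    have hv := hfs Nδ hNδs
    rw [hrep] at hv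
    have hpt : ∀ v w, Nδ v w * Bf v w
        = (d - δ) * (if v = w then Bf v w else 0)
          + (-1 - δ) * (Bf v w - (if v = w then Bf v w else 0)) := by
      intro v w
      by_cases hvw : v = w
      · subst hvw
        show (if v = v then d - δ else _) * Bf v v = _
        rw [if_pos rfl, if_pos rfl]
        ring
      · show (if v = w then d - δ else if G.Adj v w then 0 else -1 - δ) * Bf v w = _
        rw [if_neg hvw, if_neg (by exact fun h => hvw h : ¬ v = w)]
        by_cases hadj : G.Adj v w
        · rw [if_pos hadj, hedge0 v w hadj]; ring
        · rw [if_neg hadj]; ring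
    rw [Finset.sum_congr rfl (fun v _ => Finset.sum_congr rfl fun w _ => hpt v w)] at hv
    have hDsum : ∑ v, ∑ w, (if v = w then Bf v w else 0) = T := by
      refine Finset.sum_congr rfl fun v _ => ?_
      simp [Finset.sum_ite_eq]
    have hsplit : ∑ v, ∑ w, ((d - δ) * (if v = w then Bf v w else 0)
          + (-1 - δ) * (Bf v w - (if v = w then Bf v w else 0)))
        = (d - δ) * T + (-1 - δ) * (S - T) := by
      rw [← hDsum, hS]
      simp only [Finset.sum_add_distrib, Finset.sum_sub_distrib, ← Finset.mul_sum]
    rw [hsplit] at hv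
    exact hv
  have hmain : (d + 1) * T ≤ S := by
    refine le_of_forall_pos_le_add fun η hη => ?_
    have hδ : 0 < η / (S + 1) := by positivity
    have h1 := hkey _ hδ
    have h2 : η / (S + 1) * S ≤ η := by
      rw [div_mul_eq_mul_div, div_le_iff₀ (by linarith)]
      nlinarith
    nlinarith
  by_cases hT0 : T = 0
  · -- Bf = 0, contradiction with f N₀ < u ≤ 0
    have hdz : ∀ v, Bf v v = 0 := by
      have := (Finset.sum_eq_zero_iff_of_nonneg (fun v _ => hdiag v)).mp hT0
      intro v; exact this v (Finset.mem_univ v)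
    have hz : ∀ v w, Bf v w = 0 := by
      intro v w
      by_cases hvw : v = w
      · subst hvw; exact hdz v
      · have h1 := quad_two hPSDf hvw 1 1
        have h2 := quad_two hPSDf hvw 1 (-1)
        rw [hdz v, hdz w] at h1 h2
        have hv' := helem v w
        have hw' := helem w v
        nlinarith
    have : f N₀ = 0 := by
      rw [hrep]
      apply Finset.sum_eq_zero; intro v _
      apply Finset.sum_eq_zero; intro w _
      rw [hz v w, mul_zero]
    linarith
  · have hTpos : 0 < T := lt_of_le_of_ne hTnn (Ne.symm hT0)
    -- build primal feasible matrix with value S / T ≥ d + 1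
    set Bm : Matrix V V ℝ := Matrix.of (fun v w => (Bf v w + Bf w v) / (2 * T)) with hBm
    have hBmPSD : Bm.PosSemidef := by
      refine psd_of_quad (fun v w => ?_) (fun x => ?_)
      · show (Bf v w + Bf w v) / (2 * T) = (Bf w v + Bf v w) / (2 * T)
        ring
      · have e1 : ∑ v, ∑ w, x v * Bm v w * x w
            = ((∑ v, ∑ w, x v * Bf v w * x w) + ∑ v, ∑ w, x v * Bf w v * x w) / (2 * T) := by
          simp only [← Finset.sum_add_distrib, Finset.sum_div]
          refine Finset.sum_congr rfl fun v _ => ?_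
          refine Finset.sum_congr rfl fun w _ => ?_
          simp only [hBm, Matrix.of_apply]
          ring
        have e2 : ∑ v, ∑ w, x v * Bf w v * x w = ∑ v, ∑ w, x v * Bf v w * x w := by
          rw [Finset.sum_comm]
          exact Finset.sum_congr rfl fun v _ => Finset.sum_congr rfl fun w _ => by ring
        rw [e1, e2]
        have := hPSDf x
        positivity
    have hBmtr : Bm.trace = 1 := by
      have : Bm.trace = ∑ v, (Bf v v + Bf v v) / (2 * T) := by
        simp [Matrix.trace, Matrix.diag, hBm]
      rw [this]
      have e : ∀ v : V, (Bf v v + Bf v v) / (2 * T) = Bf v v / T := by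
        intro v
        rw [show Bf v v + Bf v v = 2 * Bf v v from by ring]
        rw [mul_div_mul_left _ _ (two_ne_zero)]
      rw [Finset.sum_congr rfl fun v _ => e v, ← Finset.sum_div, ← hT, div_self hT0]
    have hBmnn : ∀ v w, 0 ≤ Bm v w := by
      intro v w
      show 0 ≤ (Bf v w + Bf w v) / (2 * T)
      have := helem v w; have := helem w v
      positivity
    have hBme : ∀ v w, G.Adj v w → Bm v w = 0 := by
      intro v w hadj
      show (Bf v w + Bf w v) / (2 * T) = 0
      rw [hedge0 v w hadj, hedge0 w v (G.adj_symm hadj)]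
      simp
    have hBmval : ∑ v, ∑ w, Bm v w = S / T := by
      have e1 : ∑ v, ∑ w, Bm v w
          = ((∑ v, ∑ w, Bf v w) + ∑ v : V, ∑ w : V, Bf w v) / (2 * T) := by
        simp only [← Finset.sum_add_distrib, Finset.sum_div]
        refine Finset.sum_congr rfl fun v _ => ?_
        refine Finset.sum_congr rfl fun w _ => ?_
        simp only [hBm, Matrix.of_apply]
      have e2 : ∑ v : V, ∑ w : V, Bf w v = S := by
        rw [hS]; rw [Finset.sum_comm]
      rw [e1, e2, ← hS,
        show S + S = 2 * S from by ring, mul_div_mul_left _ _ (two_ne_zero)]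
    have hle : S / T ≤ G.thetaMinus := by
      apply le_csSup (bdd_thetaMinus_set G)
      exact ⟨Bm, hBmPSD, hBmtr, hBmnn, hBme, hBmval.symm⟩
    have hge : d + 1 ≤ S / T := by
      rw [le_div_iff₀ hTpos]
      exact hmain
    rw [hd] at hge
    linarith
lemma herm_sym {B : Matrix V V ℝ} (h : B.IsHermitian) (v w : V) : B v w = B w v := by
  have := h.apply w v
  simpa using this

lemma psd_smul {B : Matrix V V ℝ} (hB : B.PosSemidef) {c : ℝ} (hc : 0 ≤ c) :
    (c • B).PosSemidef := by
  refine psd_of_quad (fun v w => ?_) (fun x => ?_)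
  · show c • B v w = c • B w v
    rw [herm_sym hB.1 v w]
  · have e : ∑ v, ∑ w, x v * (c • B) v w * x w = c * ∑ v, ∑ w, x v * B v w * x w := by
      rw [Finset.mul_sum]
      refine Finset.sum_congr rfl fun v _ => ?_
      rw [Finset.mul_sum]
      refine Finset.sum_congr rfl fun w _ => ?_
      show x v * (c • B v w) * x w = _
      rw [smul_eq_mul]; ring
    rw [e]
    exact mul_nonneg hc (psd_quad hB x)

lemma psd_inner {Y B : Matrix V V ℝ} (hY : Y.PosSemidef) (hB : B.PosSemidef) :
    0 ≤ ∑ p, ∑ q, Y p q * B p q := by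
  obtain ⟨E, hE⟩ : ∃ E : Matrix V V ℝ, B = Eᴴ * E := by
    classical
    open scoped MatrixOrder in
    obtain ⟨E, hE⟩ := CStarAlgebra.nonneg_iff_eq_star_mul_self.mp hB.nonneg
    exact ⟨E, hE⟩
  have hBE : ∀ p q, B p q = ∑ m, E m p * E m q := by
    intro p q
    rw [hE]
    simp [Matrix.mul_apply, Matrix.conjTranspose_apply]
  have e1 : ∀ p, ∑ q, Y p q * B p q = ∑ m, ∑ q, E m p * Y p q * E m q := by
    intro p
    calc ∑ q, Y p q * B p q = ∑ q, ∑ m, E m p * Y p q * E m q := by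
          refine Finset.sum_congr rfl fun q _ => ?_
          rw [hBE, Finset.mul_sum]
          exact Finset.sum_congr rfl fun m _ => by ring
    _ = ∑ m, ∑ q, E m p * Y p q * E m q := Finset.sum_comm
  rw [show (∑ p, ∑ q, Y p q * B p q) = ∑ m, ∑ p, ∑ q, E m p * Y p q * E m q from ?_]
  · exact Finset.sum_nonneg fun m _ => psd_quad hY (fun p => E m p)
  · rw [Finset.sum_congr rfl fun p _ => e1 p]
    exact Finset.sum_comm

lemma sum4_swap {W : Type*} [Fintype W] (f : V → W → V → W → ℝ) :
    ∑ w, ∑ w', ∑ v, ∑ v', f v w v' w' = ∑ v, ∑ w, ∑ v', ∑ w', f v w v' w' := by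
  calc ∑ w, ∑ w', ∑ v, ∑ v', f v w v' w'
      = ∑ w, ∑ v, ∑ w', ∑ v', f v w v' w' :=
        Finset.sum_congr rfl fun w _ => Finset.sum_comm
  _ = ∑ v, ∑ w, ∑ w', ∑ v', f v w v' w' := Finset.sum_comm
  _ = ∑ v, ∑ w, ∑ v', ∑ w', f v w v' w' :=
        Finset.sum_congr rfl fun v _ => Finset.sum_congr rfl fun w _ => Finset.sum_comm

lemma psd_tensor {W : Type*} [Fintype W] {Z : Matrix V V ℝ}
    (hZ : Z.PosSemidef) (x : W → ℝ) :
    (Matrix.of fun p q : V × W => Z p.1 q.1 * (x p.2 * x q.2)).PosSemidef := by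
  refine psd_of_quad (fun p q => ?_) (fun y => ?_)
  · show Z p.1 q.1 * (x p.2 * x q.2) = Z q.1 p.1 * (x q.2 * x p.2)
    rw [herm_sym hZ.1 p.1 q.1]; ring
  · have e : ∑ p, ∑ q, y p * (Matrix.of fun p q : V × W => Z p.1 q.1 * (x p.2 * x q.2)) p q * y q
        = ∑ v, ∑ v', (∑ w, x w * y (v, w)) * Z v v' * (∑ w, x w * y (v', w)) := by
      simp only [Matrix.of_apply, Fintype.sum_prod_type]
      refine Finset.sum_congr rfl fun v _ => ?_
      rw [Finset.sum_comm]
      refine Finset.sum_congr rfl fun v' _ => ?_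
      have e1 : ∀ w, ∑ w', y (v, w) * (Z v v' * (x w * x w')) * y (v', w')
          = (x w * y (v, w)) * (Z v v' * ∑ w', x w' * y (v', w')) := by
        intro w
        rw [Finset.mul_sum, Finset.mul_sum]
        exact Finset.sum_congr rfl fun w' _ => by ring
      rw [Finset.sum_congr rfl fun w _ => e1 w, ← Finset.sum_mul]
      ring
    rw [e]
    exact psd_quad hZ _


set_option linter.unusedSectionVars false

lemma bdd_thetaPlus_set (G : SimpleGraph V) :
    BddAbove {x | ∃ B : Matrix V V ℝ, B.PosSemidef ∧ B.trace = 1 ∧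
      (∀ v w, G.Adj v w → B v w ≤ 0) ∧ x = ∑ v, ∑ w, B v w} :=
  ⟨(Fintype.card V : ℝ), by rintro x ⟨B, h1, h2, -, rfl⟩; exact psd_sum_le_card h1 h2⟩

lemma thetaMinus_def (G : SimpleGraph V) : G.thetaMinus
    = sSup {x | ∃ B : Matrix V V ℝ, B.PosSemidef ∧ B.trace = 1 ∧ (∀ v w, 0 ≤ B v w) ∧
      (∀ v w, G.Adj v w → B v w = 0) ∧ x = ∑ v, ∑ w, B v w} := rfl

lemma thetaPlus_def (G : SimpleGraph V) : G.thetaPlus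
    = sSup {x | ∃ B : Matrix V V ℝ, B.PosSemidef ∧ B.trace = 1 ∧
      (∀ v w, G.Adj v w → B v w ≤ 0) ∧ x = ∑ v, ∑ w, B v w} := rfl

lemma psd_diag_zero {B : Matrix V V ℝ} (hB : B.PosSemidef) (hd : ∀ v, B v v = 0) :
    ∀ v w, B v w = 0 := by
  intro v w
  by_cases hvw : v = w
  · subst hvw; exact hd v
  · have h1 := quad_two (fun x => psd_quad hB x) hvw 1 1
    have h2 := quad_two (fun x => psd_quad hB x) hvw 1 (-1)
    have hs : B w v = B v w := by have := hB.1.apply v w; simpa using this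
    rw [hd v, hd w] at h1 h2
    nlinarith

lemma quad_diag {B : V → V → ℝ} (h : ∀ x : V → ℝ, 0 ≤ ∑ v, ∑ w, x v * B v w * x w)
    (v : V) : 0 ≤ B v v := by
  classical
  have h2 := h (fun u => if u = v then 1 else 0)
  have he : (∑ u, ∑ u', (if u = v then (1:ℝ) else 0) * B u u' * (if u' = v then 1 else 0))
      = B v v := by
    have hpt : ∀ u u', (if u = v then (1:ℝ) else 0) * B u u' * (if u' = v then 1 else 0)
        = if u = v then (if u' = v then B v v else 0) else 0 := by
      intro u u'
      by_cases h1 : u = v <;> by_cases h2 : u' = v <;> simp_all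
    simp [hpt, Finset.sum_ite_eq']
  rw [he] at h2
  exact h2

lemma thetaMinus_of_isEmpty [IsEmpty V] (G : SimpleGraph V) : G.thetaMinus = 0 := by
  rw [thetaMinus_def]
  convert Real.sSup_empty using 2
  rw [Set.eq_empty_iff_forall_notMem]
  rintro x ⟨B, -, htr, -⟩
  have h0 : B.trace = 0 := by simp [Matrix.trace]
  rw [h0] at htr
  exact one_ne_zero htr.symm

lemma thetaPlus_of_isEmpty [IsEmpty V] (G : SimpleGraph V) : G.thetaPlus = 0 := by
  rw [thetaPlus_def]
  convert Real.sSup_empty using 2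
  rw [Set.eq_empty_iff_forall_notMem]
  rintro x ⟨B, -, htr, -⟩
  have h0 : B.trace = 0 := by simp [Matrix.trace]
  rw [h0] at htr
  exact one_ne_zero htr.symm

lemma scaled_id (G : SimpleGraph V) [Nonempty V] :
    ∃ B : Matrix V V ℝ, B.PosSemidef ∧ B.trace = 1 ∧ (∀ v w, 0 ≤ B v w) ∧
      (∀ v w, G.Adj v w → B v w = 0) ∧ (1:ℝ) = ∑ v, ∑ w, B v w := by
  classical
  set n : ℝ := (Fintype.card V : ℝ) with hn
  have hn0 : 0 < n := by rw [hn]; exact_mod_cast Fintype.card_pos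
  refine ⟨Matrix.of (fun v w => if v = w then n⁻¹ else 0), ?_, ?_, ?_, ?_, ?_⟩
  · refine psd_of_quad (fun v w => ?_) (fun x => ?_)
    · show (if v = w then n⁻¹ else 0) = (if w = v then n⁻¹ else 0)
      by_cases h : v = w
      · subst h; rfl
      · rw [if_neg h, if_neg (Ne.symm h)]
    · have e : ∀ v, ∑ w, x v * (Matrix.of (fun v w : V => if v = w then n⁻¹ else 0)) v w * x w
          = n⁻¹ * (x v * x v) := by
        intro v
        calc ∑ w, x v * (Matrix.of (fun v w : V => if v = w then n⁻¹ else 0)) v w * x w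
            = ∑ w, (if v = w then n⁻¹ * (x v * x w) else 0) := by
              refine Finset.sum_congr rfl fun w _ => ?_
              simp only [Matrix.of_apply]
              by_cases h : v = w
              · rw [if_pos h, if_pos h]; ring
              · rw [if_neg h, if_neg h, mul_zero, zero_mul]
        _ = n⁻¹ * (x v * x v) := by rw [Finset.sum_ite_eq]; simp
      rw [Finset.sum_congr rfl fun v _ => e v]
      refine Finset.sum_nonneg fun v _ => ?_
      exact mul_nonneg (inv_nonneg.mpr hn0.le) (mul_self_nonneg _)
  · have : (Matrix.of (fun v w : V => if v = w then n⁻¹ else 0)).trace = ∑ v : V, n⁻¹ := by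
      simp [Matrix.trace, Matrix.diag]
    rw [this, Finset.sum_const, Finset.card_univ, nsmul_eq_mul, ← hn]
    exact mul_inv_cancel₀ hn0.ne'
  · intro v w
    show 0 ≤ if v = w then n⁻¹ else 0
    by_cases h : v = w
    · rw [if_pos h]; exact inv_nonneg.mpr hn0.le
    · rw [if_neg h]
  · intro v w h
    show (if v = w then n⁻¹ else 0) = 0
    rw [if_neg (G.ne_of_adj h)]
  · have e : ∀ v, ∑ w, (Matrix.of (fun v w : V => if v = w then n⁻¹ else 0)) v w = n⁻¹ := by
      intro v
      calc ∑ w, (Matrix.of (fun v w : V => if v = w then n⁻¹ else 0)) v w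
          = ∑ w, (if v = w then n⁻¹ else 0) := rfl
      _ = n⁻¹ := by rw [Finset.sum_ite_eq]; simp
    rw [Finset.sum_congr rfl fun v _ => e v, Finset.sum_const, Finset.card_univ, nsmul_eq_mul,
      ← hn]
    exact (mul_inv_cancel₀ hn0.ne').symm

lemma one_le_thetaMinus [Nonempty V] (G : SimpleGraph V) : 1 ≤ G.thetaMinus := by
  obtain ⟨B, h1, h2, h3, h4, h5⟩ := scaled_id G
  rw [thetaMinus_def]
  exact le_csSup (bdd_thetaMinus_set G) ⟨B, h1, h2, h3, h4, h5⟩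

lemma one_le_thetaPlus [Nonempty V] (G : SimpleGraph V) : 1 ≤ G.thetaPlus := by
  obtain ⟨B, h1, h2, h3, h4, h5⟩ := scaled_id G
  rw [thetaPlus_def]
  exact le_csSup (bdd_thetaPlus_set G) ⟨B, h1, h2, fun v w h => le_of_eq (h4 v w h), h5⟩

end ThetaAux

open ThetaAux

theorem thetaMinus_strongProd_le {V W : Type*} [Fintype V] [Fintype W]
    (G : SimpleGraph V) (H : SimpleGraph W) :
    (G.strongProd H).thetaMinus ≤ G.thetaMinus * H.thetaPlus := by
  classical
  rcases isEmpty_or_nonempty V with hV | hV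
  · rw [thetaMinus_of_isEmpty (G.strongProd H), thetaMinus_of_isEmpty G, zero_mul]
  rcases isEmpty_or_nonempty W with hW | hW
  · rw [thetaMinus_of_isEmpty (G.strongProd H), thetaPlus_of_isEmpty H, mul_zero]
  have hG1 : 1 ≤ G.thetaMinus := one_le_thetaMinus G
  have hH1 : 1 ≤ H.thetaPlus := one_le_thetaPlus H
  have key : ∀ ε : ℝ, 0 < ε →
      (G.strongProd H).thetaMinus ≤ (G.thetaMinus + ε) * H.thetaPlus := by
    intro ε hε
    obtain ⟨M, hMpsd, hMne, hMdiag⟩ := exists_dual G hε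
    set lam : ℝ := G.thetaMinus + ε with hlam
    have hlam1 : 1 ≤ lam := by rw [hlam]; linarith
    have hrhs : 0 ≤ lam * H.thetaPlus := by nlinarith
    rw [thetaMinus_def]
    refine Real.sSup_le ?_ hrhs
    rintro x ⟨B, hBpsd, hBtr, hBnn, hBe, rfl⟩
    set A : Matrix W W ℝ :=
      Matrix.of (fun w w' => ∑ v, ∑ v', (1 + M v v') * B (v, w) (v', w')) with hA
    have hMsym : ∀ v v', M v v' = M v' v := fun v v' => herm_sym hMpsd.1 v v'
    have hBsym : ∀ p q, B p q = B q p := fun p q => herm_sym hBpsd.1 p q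
    have hZpsd : (Matrix.of fun a b : V => (1:ℝ) + M a b).PosSemidef := by
      refine psd_of_quad (fun v v' => ?_) (fun x => ?_)
      · show (1:ℝ) + M v v' = 1 + M v' v
        rw [hMsym v v']
      · have e : ∑ v, ∑ v', x v * (Matrix.of fun a b : V => (1:ℝ) + M a b) v v' * x v'
            = (∑ v, x v) * (∑ v', x v') + ∑ v, ∑ v', x v * M v v' * x v' := by
          calc ∑ v, ∑ v', x v * (Matrix.of fun a b : V => (1:ℝ) + M a b) v v' * x v'
              = ∑ v, ∑ v', (x v * x v' + x v * M v v' * x v') := by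
                refine Finset.sum_congr rfl fun v _ => Finset.sum_congr rfl fun v' _ => ?_
                simp only [Matrix.of_apply]
                ring
          _ = (∑ v, ∑ v', x v * x v') + ∑ v, ∑ v', x v * M v v' * x v' := by
                simp only [Finset.sum_add_distrib]
          _ = (∑ v, x v) * (∑ v', x v') + ∑ v, ∑ v', x v * M v v' * x v' := by
                congr 1
                rw [show (∑ v, ∑ v', x v * x v') = ∑ v, x v * ∑ v', x v' from
                  Finset.sum_congr rfl fun v _ => (Finset.mul_sum _ _ _).symm, ← Finset.sum_mul]
        rw [e]
        have h1 := mul_self_nonneg (∑ v, x v)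
        have h2 := psd_quad hMpsd x
        linarith
    have hApsd : A.PosSemidef := by
      refine psd_of_quad (fun w w' => ?_) (fun x => ?_)
      · show (∑ v, ∑ v', (1 + M v v') * B (v, w) (v', w'))
            = ∑ v, ∑ v', (1 + M v v') * B (v, w') (v', w)
        conv_rhs => rw [Finset.sum_comm]
        refine Finset.sum_congr rfl fun v _ => Finset.sum_congr rfl fun v' _ => ?_
        rw [hMsym v v', hBsym (v, w) (v', w')]
      · have hin := psd_inner (psd_tensor hZpsd x) hBpsd
        simp only [Matrix.of_apply] at hin
        have e : ∑ w, ∑ w', x w * A w w' * x w'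
            = ∑ p : V × W, ∑ q : V × W, (1 + M p.1 q.1) * (x p.2 * x q.2) * B p q := by
          have e2 : ∑ p : V × W, ∑ q : V × W, (1 + M p.1 q.1) * (x p.2 * x q.2) * B p q
              = ∑ v, ∑ w, ∑ v', ∑ w', (1 + M v v') * (x w * x w') * B (v, w) (v', w') := by
            rw [Fintype.sum_prod_type]
            refine Finset.sum_congr rfl fun v _ => Finset.sum_congr rfl fun w _ => ?_
            rw [Fintype.sum_prod_type]
          rw [e2, ← sum4_swap]
          refine Finset.sum_congr rfl fun w _ => Finset.sum_congr rfl fun w' _ => ?_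
          simp only [hA, Matrix.of_apply]
          rw [Finset.mul_sum, Finset.sum_mul]
          refine Finset.sum_congr rfl fun v _ => ?_
          rw [Finset.mul_sum, Finset.sum_mul]
          refine Finset.sum_congr rfl fun v' _ => by ring
        rw [e]
        exact hin
    have htrA0 : 0 ≤ A.trace := by
      have : A.trace = ∑ w, A w w := by simp [Matrix.trace, Matrix.diag]
      rw [this]
      exact Finset.sum_nonneg fun w _ => quad_diag (psd_quad hApsd) w
    have htrA : A.trace ≤ lam := by
      have htr1 : A.trace = ∑ w, ∑ v, ∑ v', (1 + M v v') * B (v, w) (v', w) := by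
        simp [Matrix.trace, Matrix.diag, hA]
      have hterm : ∀ (w : W) (v v' : V), (1 + M v v') * B (v, w) (v', w)
          ≤ if v = v' then lam * B (v, w) (v, w) else 0 := by
        intro w v v'
        by_cases hvv : v = v'
        · subst hvv
          rw [if_pos rfl]
          have h1 : 0 ≤ B (v, w) (v, w) := hBnn _ _
          have h2 := hMdiag v
          have h3 : 1 + M v v ≤ lam := by rw [hlam]; linarith
          nlinarith
        · rw [if_neg hvv]
          by_cases hadj : G.Adj v v'
          · have hB0 : B (v, w) (v', w) = 0 :=
              hBe _ _ ⟨fun h => hvv (congrArg Prod.fst h), Or.inr hadj, Or.inl rfl⟩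
            rw [hB0, mul_zero]
          · have h1 := hMne v v' hvv hadj
            have h2 := hBnn (v, w) (v', w)
            nlinarith
      have htrB : ∑ w, ∑ v, B (v, w) (v, w) = 1 := by
        have h1 : B.trace = ∑ v, ∑ w, B (v, w) (v, w) := by
          simp [Matrix.trace, Matrix.diag, Fintype.sum_prod_type]
        rw [h1] at hBtr
        rw [Finset.sum_comm]
        exact hBtr
      calc A.trace = ∑ w, ∑ v, ∑ v', (1 + M v v') * B (v, w) (v', w) := htr1
      _ ≤ ∑ w, ∑ v, ∑ v', (if v = v' then lam * B (v, w) (v, w) else 0) :=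
            Finset.sum_le_sum fun w _ => Finset.sum_le_sum fun v _ =>
              Finset.sum_le_sum fun v' _ => hterm w v v'
      _ = ∑ w, ∑ v, lam * B (v, w) (v, w) := by
            refine Finset.sum_congr rfl fun w _ => Finset.sum_congr rfl fun v _ => ?_
            rw [Finset.sum_ite_eq]
            simp
      _ = lam * ∑ w, ∑ v, B (v, w) (v, w) := by
            rw [Finset.mul_sum]
            exact Finset.sum_congr rfl fun w _ => (Finset.mul_sum _ _ _).symm
      _ = lam := by rw [htrB, mul_one]
    have hAedge : ∀ w w', H.Adj w w' → A w w' ≤ 0 := by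
      intro w w' hadj
      have hww : w ≠ w' := H.ne_of_adj hadj
      have hAe : A w w' = ∑ v, ∑ v', (1 + M v v') * B (v, w) (v', w') := rfl
      rw [hAe]
      refine Finset.sum_nonpos fun v _ => Finset.sum_nonpos fun v' _ => ?_
      by_cases hvv : v = v'
      · subst hvv
        have hB0 : B (v, w) (v, w') = 0 :=
          hBe _ _ ⟨fun h => hww (congrArg Prod.snd h), Or.inl rfl, Or.inr hadj⟩
        rw [hB0, mul_zero]
      · by_cases hadjG : G.Adj v v'
        · have hB0 : B (v, w) (v', w') = 0 :=
            hBe _ _ ⟨fun h => hvv (congrArg Prod.fst h), Or.inr hadjG, Or.inr hadj⟩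
          rw [hB0, mul_zero]
        · have h1 := hMne v v' hvv hadjG
          have h2 := hBnn (v, w) (v', w')
          nlinarith
    have hSA : ∑ p, ∑ q, B p q ≤ ∑ w, ∑ w', A w w' := by
      have hsum : ∑ w, ∑ w', A w w'
          = ∑ v, ∑ w, ∑ v', ∑ w', (1 + M v v') * B (v, w) (v', w') := by
        rw [← sum4_swap]
        rfl
      have hsplit : ∑ v, ∑ w, ∑ v', ∑ w', (1 + M v v') * B (v, w) (v', w')
          = (∑ v, ∑ w, ∑ v', ∑ w', B (v, w) (v', w'))
            + ∑ v, ∑ w, ∑ v', ∑ w', M v v' * B (v, w) (v', w') := by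
        simp only [← Finset.sum_add_distrib]
        refine Finset.sum_congr rfl fun v _ => Finset.sum_congr rfl fun w _ =>
          Finset.sum_congr rfl fun v' _ => Finset.sum_congr rfl fun w' _ => by ring
      have hB4 : ∑ p, ∑ q, B p q = ∑ v, ∑ w, ∑ v', ∑ w', B (v, w) (v', w') := by
        rw [Fintype.sum_prod_type]
        refine Finset.sum_congr rfl fun v _ => Finset.sum_congr rfl fun w _ => ?_
        rw [Fintype.sum_prod_type]
      have hM4 : 0 ≤ ∑ v, ∑ w, ∑ v', ∑ w', M v v' * B (v, w) (v', w') := by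
        have hps := psd_inner (psd_tensor hMpsd (fun _ : W => (1:ℝ))) hBpsd
        simp only [Matrix.of_apply, mul_one] at hps
        have e : ∑ p : V × W, ∑ q : V × W, M p.1 q.1 * B p q
            = ∑ v, ∑ w, ∑ v', ∑ w', M v v' * B (v, w) (v', w') := by
          rw [Fintype.sum_prod_type]
          refine Finset.sum_congr rfl fun v _ => Finset.sum_congr rfl fun w _ => ?_
          rw [Fintype.sum_prod_type]
        rw [e] at hps
        exact hps
      rw [hsum, hsplit, ← hB4]
      linarith
    rcases eq_or_lt_of_le htrA0 with htr0 | htrpos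
    · have hdsum : ∑ w, A w w = 0 := by
        have h1 : A.trace = ∑ w, A w w := by simp [Matrix.trace, Matrix.diag]
        rw [← h1, ← htr0]
      have hdz : ∀ w, A w w = 0 := by
        intro w
        exact (Finset.sum_eq_zero_iff_of_nonneg
          (fun w _ => quad_diag (psd_quad hApsd) w)).mp hdsum w (Finset.mem_univ w)
      have hz := psd_diag_zero hApsd hdz
      have hzero : ∑ w, ∑ w', A w w' = 0 :=
        Finset.sum_eq_zero fun w _ => Finset.sum_eq_zero fun w' _ => hz w w'
      rw [hzero] at hSA
      linarith
    · set c : ℝ := (A.trace)⁻¹ with hc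
      have hcpos : 0 < c := by rw [hc]; exact inv_pos.mpr htrpos
      have hfeas : c * (∑ w, ∑ w', A w w') ∈ {x | ∃ B' : Matrix W W ℝ, B'.PosSemidef ∧
          B'.trace = 1 ∧ (∀ v w, H.Adj v w → B' v w ≤ 0) ∧ x = ∑ v, ∑ w, B' v w} := by
        refine ⟨c • A, psd_smul hApsd hcpos.le, ?_, ?_, ?_⟩
        · rw [Matrix.trace_smul, hc, smul_eq_mul, inv_mul_cancel₀ (ne_of_gt htrpos)]
        · intro w w' h
          show c • A w w' ≤ 0
          rw [smul_eq_mul]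
          have := hAedge w w' h
          nlinarith
        · rw [Finset.mul_sum]
          refine Finset.sum_congr rfl fun w _ => ?_
          rw [Finset.mul_sum]
          exact Finset.sum_congr rfl fun w' _ => rfl
      have hval := le_csSup (bdd_thetaPlus_set H) hfeas
      rw [← thetaPlus_def] at hval
      have hAsum : ∑ w, ∑ w', A w w' = A.trace * (c * ∑ w, ∑ w', A w w') := by
        rw [hc, ← mul_assoc, mul_inv_cancel₀ (ne_of_gt htrpos), one_mul]
      calc ∑ p, ∑ q, B p q ≤ ∑ w, ∑ w', A w w' := hSA
      _ = A.trace * (c * ∑ w, ∑ w', A w w') := hAsum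
      _ ≤ A.trace * H.thetaPlus := mul_le_mul_of_nonneg_left hval htrA0
      _ ≤ lam * H.thetaPlus := mul_le_mul_of_nonneg_right htrA (by linarith)
  refine le_of_forall_pos_le_add fun η hη => ?_
  have hHpos : 0 < H.thetaPlus := lt_of_lt_of_le one_pos hH1
  have hk := key (η / H.thetaPlus) (by positivity)
  have he : (G.thetaMinus + η / H.thetaPlus) * H.thetaPlus = G.thetaMinus * H.thetaPlus + η := by
    field_simp
  linarith
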